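/- For Young diagrams $A$ (with at most $N_1$ columns) and $B$ (with at most $N_2$ rows), at $\beta = 1$: $\prod_{i=1}^{N_2}\prod_{j=1}^{N_1}\frac{x+1-(i+j)}{x+1+A'_j+B_i-(i+j)} = \prod_{(i,j)\in A}\frac{x-N_2+i-j}{x+A'_j+B_i-i-j+1} \cdot \prod_{(i,j)\in B}\frac{x-N_1-i+j}{x-B'_j-A_i+i+j-1}$. -/

import Mathlib

open Finset

lemma galois_anti {p q : ℕ → ℕ} (H : ∀ i j, j < p i ↔ i < q j) {i i' : ℕ} (h : i ≤ i') :
    p i' ≤ p i := by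
  rcases Nat.eq_zero_or_pos (p i') with h0 | h0
  · omega
  · have h1 : p i' - 1 < p i' := by omega
    have h2 := (H i _).2 (lt_of_le_of_lt h ((H i' _).1 h1))
    omega

lemma core {p q : ℕ → ℕ} (H : ∀ i j, j < p i ↔ i < q j) (n : ℕ) (hn : ∀ i, n ≤ i → p i = 0) :
    ∀ (d r : ℕ), r ≤ n → n - r = d → ∀ (y : ℝ),
    (∏ i ∈ Finset.Ico r n, (y + (p i : ℝ) - i - 1)) * ∏ j ∈ Finset.range (p r), (y + (j:ℝ) - q j)
      = ∏ k ∈ Finset.range ((n - r) + p r), (y + ((p r : ℝ) - r - 1) - k) := by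
  intro d
  induction d with
  | zero =>
    intro r hr hd y
    have hrn : r = n := by omega
    subst hrn
    simp [hn r le_rfl]
  | succ d ih =>
    intro r hr hd y
    have hrn : r < n := by omega
    have hmm : p (r+1) ≤ p r := galois_anti H (by omega)
    have hq : ∀ j, p (r+1) ≤ j → j < p r → q j = r + 1 := by
      intro j h1 h2
      have ha : r < q j := (H r j).1 h2
      have hb : ¬ (r + 1 < q j) := fun hh => by
        have := (H (r+1) j).2 hh; omega
      omega
    have hIH := ih (r+1) (by omega) (by omega) y
    have hsplit : (∏ i ∈ Finset.Ico r n, (y + (p i : ℝ) - i - 1))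
        = (y + (p r : ℝ) - r - 1) * ∏ i ∈ Finset.Ico (r+1) n, (y + (p i : ℝ) - i - 1) := by
      rw [Finset.prod_eq_prod_Ico_succ_bot hrn]
    have hsplit2 : (∏ j ∈ Finset.range (p r), (y + (j:ℝ) - q j))
        = (∏ j ∈ Finset.range (p (r+1)), (y + (j:ℝ) - q j))
          * ∏ j ∈ Finset.Ico (p (r+1)) (p r), (y + (j:ℝ) - q j) := by
      simp only [Finset.range_eq_Ico]
      exact (Finset.prod_Ico_consecutive _ (Nat.zero_le _) hmm).symm
    have hrun : (∏ j ∈ Finset.Ico (p (r+1)) (p r), (y + (j:ℝ) - q j))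
        = ∏ k ∈ Finset.range (p r - p (r+1)), (y + ((p (r+1):ℝ) + k) - r - 1) := by
      rw [Finset.prod_Ico_eq_prod_range]
      refine Finset.prod_congr rfl fun k hk => ?_
      rw [Finset.mem_range] at hk
      rw [hq (p (r+1) + k) (by omega) (by omega)]
      push_cast; ring
    have hK : (n - r) + p r = ((p r - p (r+1) + 1)) + ((n - (r+1)) + p (r+1)) := by omega
    have hRHS : (∏ k ∈ Finset.range ((n - r) + p r), (y + ((p r : ℝ) - r - 1) - k))
        = (∏ k ∈ Finset.range (p r - p (r+1) + 1), (y + ((p r : ℝ) - r - 1) - k))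
          * ∏ k ∈ Finset.range ((n - (r+1)) + p (r+1)),
              (y + ((p r : ℝ) - r - 1) - ((p r - p (r+1) + 1 + k : ℕ) : ℝ)) := by
      rw [hK]
      exact Finset.prod_range_add (fun k => y + ((p r : ℝ) - r - 1) - (k:ℝ)) _ _
    have hchunk2 : (∏ k ∈ Finset.range ((n - (r+1)) + p (r+1)),
            (y + ((p r : ℝ) - r - 1) - ((p r - p (r+1) + 1 + k : ℕ) : ℝ)))
        = ∏ k ∈ Finset.range ((n - (r+1)) + p (r+1)), (y + ((p (r+1) : ℝ) - ((r+1:ℕ):ℝ) - 1) - k) := by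
      refine Finset.prod_congr rfl fun k hk => ?_
      push_cast [Nat.cast_sub hmm]
      ring
    have hchunk1 : (∏ k ∈ Finset.range (p r - p (r+1) + 1), (y + ((p r : ℝ) - r - 1) - k))
        = (∏ k ∈ Finset.range (p r - p (r+1)), (y + ((p r : ℝ) - r - 1) - ((k+1 : ℕ):ℝ)))
          * (y + ((p r : ℝ) - r - 1) - ((0:ℕ):ℝ)) := by
      exact Finset.prod_range_succ' (fun k => y + ((p r : ℝ) - r - 1) - (k:ℝ)) _
    have hrefl : (∏ k ∈ Finset.range (p r - p (r+1)), (y + ((p r : ℝ) - r - 1) - ((k+1 : ℕ):ℝ)))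
        = ∏ k ∈ Finset.range (p r - p (r+1)), (y + ((p (r+1):ℝ) + k) - r - 1) := by
      rw [← Finset.prod_range_reflect (fun k => y + (((p (r+1)):ℝ) + (k:ℝ)) - (r:ℝ) - 1) (p r - p (r+1))]
      refine Finset.prod_congr rfl fun k hk => ?_
      rw [Finset.mem_range] at hk
      have hcast : (p r - p (r+1) - 1 - k : ℕ) = p r - (p (r+1) + 1 + k) := by omega
      rw [hcast, Nat.cast_sub (by omega : p (r+1) + 1 + k ≤ p r)]
      push_cast; ring
    rw [hsplit, hsplit2, hrun, hRHS, hchunk2, ← hIH, hchunk1, hrefl]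
    push_cast
    ring


lemma lemA {p q : ℕ → ℕ} (H : ∀ i j, j < p i ↔ i < q j) (N : ℕ)
    (hN : ∀ i, N ≤ i → p i = 0) (r : ℕ) (y : ℝ) :
    (∏ i ∈ Finset.range (r+1), (y + (p i : ℝ) - i)) * (∏ j ∈ Finset.range (p r), (y + (j:ℝ) - q j))
        * ∏ i ∈ Finset.range N, (y + (p i : ℝ) - i - 1)
      = (∏ i ∈ Finset.range r, (y + (p i : ℝ) - i - 1))
          * (∏ j ∈ Finset.range (p r), (y + (j:ℝ) - q j + 1))
          * (∏ i ∈ Finset.range N, (y + (p i : ℝ) - i)) * (y - N) := by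
  rcases le_or_gt r N with hrN | hrN
  · -- split range N at r
    have s1 : (∏ i ∈ Finset.range N, (y + (p i : ℝ) - i - 1))
        = (∏ i ∈ Finset.range r, (y + (p i : ℝ) - i - 1))
          * ∏ i ∈ Finset.Ico r N, (y + (p i : ℝ) - i - 1) := by
      simp only [Finset.range_eq_Ico]
      exact (Finset.prod_Ico_consecutive _ (Nat.zero_le _) hrN).symm
    have s2 : (∏ i ∈ Finset.range N, (y + (p i : ℝ) - i))
        = (∏ i ∈ Finset.range r, (y + (p i : ℝ) - i))
          * ∏ i ∈ Finset.Ico r N, (y + (p i : ℝ) - i) := by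
      simp only [Finset.range_eq_Ico]
      exact (Finset.prod_Ico_consecutive _ (Nat.zero_le _) hrN).symm
    have s3 : (∏ i ∈ Finset.range (r+1), (y + (p i : ℝ) - i))
        = (∏ i ∈ Finset.range r, (y + (p i : ℝ) - i)) * (y + (p r : ℝ) - r) :=
      Finset.prod_range_succ _ _
    have c1 := core H N hN (N - r) r hrN rfl y
    have c2 := core H N hN (N - r) r hrN rfl (y + 1)
    have c2' : (∏ i ∈ Finset.Ico r N, (y + (p i : ℝ) - i))
          * ∏ j ∈ Finset.range (p r), (y + (j:ℝ) - q j + 1)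
        = ∏ k ∈ Finset.range ((N - r) + p r), (y + 1 + ((p r : ℝ) - r - 1) - k) := by
      rw [← c2]
      congr 1
      · exact Finset.prod_congr rfl fun i _ => by ring
      · exact Finset.prod_congr rfl fun j _ => by ring
    -- interval facts
    have key : (y + (p r : ℝ) - r) * ∏ k ∈ Finset.range ((N - r) + p r), (y + ((p r : ℝ) - r - 1) - k)
        = (∏ k ∈ Finset.range ((N - r) + p r), (y + 1 + ((p r : ℝ) - r - 1) - k)) * (y - N) := by
      have e1 : (∏ k ∈ Finset.range ((N - r) + p r + 1), (y + ((p r : ℝ) - r) - k))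
          = (∏ k ∈ Finset.range ((N - r) + p r), (y + ((p r : ℝ) - r) - ((k+1:ℕ):ℝ)))
            * (y + ((p r : ℝ) - r) - ((0:ℕ):ℝ)) :=
        Finset.prod_range_succ' (fun k => y + ((p r : ℝ) - r) - (k:ℝ)) _
      have e2 : (∏ k ∈ Finset.range ((N - r) + p r + 1), (y + ((p r : ℝ) - r) - k))
          = (∏ k ∈ Finset.range ((N - r) + p r), (y + ((p r : ℝ) - r) - k))
            * (y + ((p r : ℝ) - r) - (((N - r) + p r : ℕ):ℝ)) :=
        Finset.prod_range_succ _ _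
      have e3 : (((N - r) + p r : ℕ):ℝ) = (N:ℝ) - r + p r := by
        push_cast [Nat.cast_sub hrN]; ring
      have e4 : (∏ k ∈ Finset.range ((N - r) + p r), (y + ((p r : ℝ) - r) - ((k+1:ℕ):ℝ)))
          = ∏ k ∈ Finset.range ((N - r) + p r), (y + ((p r : ℝ) - r - 1) - k) :=
        Finset.prod_congr rfl fun k _ => by push_cast; ring
      have e5 : (∏ k ∈ Finset.range ((N - r) + p r), (y + ((p r : ℝ) - r) - k))
          = ∏ k ∈ Finset.range ((N - r) + p r), (y + 1 + ((p r : ℝ) - r - 1) - k) :=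
        Finset.prod_congr rfl fun k _ => by ring
      rw [e4] at e1
      rw [e3, e5] at e2
      push_cast at e1
      linear_combination e2 - e1
    rw [s1, s2, s3]
    calc ((∏ i ∈ Finset.range r, (y + (p i : ℝ) - i)) * (y + (p r : ℝ) - r))
          * (∏ j ∈ Finset.range (p r), (y + (j:ℝ) - q j))
          * ((∏ i ∈ Finset.range r, (y + (p i : ℝ) - i - 1))
            * ∏ i ∈ Finset.Ico r N, (y + (p i : ℝ) - i - 1))
        = ((∏ i ∈ Finset.range r, (y + (p i : ℝ) - i))
            * (∏ i ∈ Finset.range r, (y + (p i : ℝ) - i - 1)))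
          * ((y + (p r : ℝ) - r) * ((∏ i ∈ Finset.Ico r N, (y + (p i : ℝ) - i - 1))
            * (∏ j ∈ Finset.range (p r), (y + (j:ℝ) - q j)))) := by ring
      _ = ((∏ i ∈ Finset.range r, (y + (p i : ℝ) - i))
            * (∏ i ∈ Finset.range r, (y + (p i : ℝ) - i - 1)))
          * (((∏ i ∈ Finset.Ico r N, (y + (p i : ℝ) - i))
            * ∏ j ∈ Finset.range (p r), (y + (j:ℝ) - q j + 1)) * (y - N)) := by
            rw [c1, c2', key]
      _ = (∏ i ∈ Finset.range r, (y + (p i : ℝ) - i - 1))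
          * (∏ j ∈ Finset.range (p r), (y + (j:ℝ) - q j + 1))
          * ((∏ i ∈ Finset.range r, (y + (p i : ℝ) - i))
            * ∏ i ∈ Finset.Ico r N, (y + (p i : ℝ) - i)) * (y - N) := by ring
  · -- r > N : p r = 0, p i = 0 for i ≥ N
    have hpr : p r = 0 := hN r (by omega)
    have s1 : (∏ i ∈ Finset.range (r+1), (y + (p i : ℝ) - i))
        = (∏ i ∈ Finset.range N, (y + (p i : ℝ) - i))
          * ∏ i ∈ Finset.Ico N (r+1), (y + (p i : ℝ) - i) := by
      simp only [Finset.range_eq_Ico]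
      exact (Finset.prod_Ico_consecutive _ (Nat.zero_le _) (by omega)).symm
    have s2 : (∏ i ∈ Finset.range r, (y + (p i : ℝ) - i - 1))
        = (∏ i ∈ Finset.range N, (y + (p i : ℝ) - i - 1))
          * ∏ i ∈ Finset.Ico N r, (y + (p i : ℝ) - i - 1) := by
      simp only [Finset.range_eq_Ico]
      exact (Finset.prod_Ico_consecutive _ (Nat.zero_le _) (by omega)).symm
    have key : (∏ i ∈ Finset.Ico N (r+1), (y + (p i : ℝ) - i))
        = (∏ i ∈ Finset.Ico N r, (y + (p i : ℝ) - i - 1)) * (y - N) := by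
      have t1 : (∏ i ∈ Finset.Ico N (r+1), (y + (p i : ℝ) - i))
          = ∏ k ∈ Finset.range (r + 1 - N), (y - ((N + k : ℕ):ℝ)) := by
        rw [Finset.prod_Ico_eq_prod_range]
        refine Finset.prod_congr rfl fun k hk => ?_
        rw [Finset.mem_range] at hk
        rw [hN (N + k) (by omega)]
        push_cast; ring
      have t2 : (∏ i ∈ Finset.Ico N r, (y + (p i : ℝ) - i - 1))
          = ∏ k ∈ Finset.range (r - N), (y - ((N + k : ℕ):ℝ) - 1) := by
        rw [Finset.prod_Ico_eq_prod_range]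
        refine Finset.prod_congr rfl fun k hk => ?_
        rw [Finset.mem_range] at hk
        rw [hN (N + k) (by omega)]
        push_cast; ring
      have t3 : (∏ k ∈ Finset.range (r - N + 1), (y - (N:ℝ) - k))
          = (∏ k ∈ Finset.range (r - N), (y - (N:ℝ) - ((k+1:ℕ):ℝ))) * (y - (N:ℝ) - ((0:ℕ):ℝ)) :=
        Finset.prod_range_succ' (fun k => y - (N:ℝ) - (k:ℝ)) _
      have t4 : (∏ k ∈ Finset.range (r + 1 - N), (y - ((N + k : ℕ):ℝ)))
          = ∏ k ∈ Finset.range (r - N + 1), (y - (N:ℝ) - k) := by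
        rw [show r + 1 - N = r - N + 1 from by omega]
        refine Finset.prod_congr rfl fun k _ => by push_cast; ring
      have t5 : (∏ k ∈ Finset.range (r - N), (y - (N:ℝ) - ((k+1:ℕ):ℝ)))
          = ∏ k ∈ Finset.range (r - N), (y - ((N + k : ℕ):ℝ) - 1) := by
        refine Finset.prod_congr rfl fun k _ => by push_cast; ring
      rw [t1, t2, t4, t3, t5]
      push_cast; ring
    rw [s1, s2, key, hpr]
    simp only [Finset.range_zero, Finset.prod_empty]
    ring

lemma helperB {p q : ℕ → ℕ} (H : ∀ i j, j < p i ↔ i < q j) (N : ℕ)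
    (hqN : ∀ j, N ≤ j → q j = 0) (m s : ℕ) (hmN : m ≤ N) (hqs : q m ≤ s)
    (hps : ∀ i, q m ≤ i → i < s → p i = m) (z : ℝ) :
    (∏ i ∈ Finset.range s, (z + (i:ℝ) - p i)) * ∏ j ∈ Finset.Ico m N, (z + (q j : ℝ) - j - 1)
      = ∏ k ∈ Finset.range ((N - m) + s), (z + ((s:ℕ):ℝ) - 1 - m - k) := by
  have c := core (p := q) (q := p) (fun a b => (H b a).symm) N hqN (N - m) m hmN rfl z
  have s1 : (∏ i ∈ Finset.range s, (z + (i:ℝ) - p i))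
      = (∏ i ∈ Finset.range (q m), (z + (i:ℝ) - p i))
        * ∏ i ∈ Finset.Ico (q m) s, (z + (i:ℝ) - p i) := by
    simp only [Finset.range_eq_Ico]
    exact (Finset.prod_Ico_consecutive _ (Nat.zero_le _) hqs).symm
  have run : (∏ i ∈ Finset.Ico (q m) s, (z + (i:ℝ) - p i))
      = ∏ k ∈ Finset.range (s - q m), (z + ((q m + k : ℕ):ℝ) - m) := by
    rw [Finset.prod_Ico_eq_prod_range]
    refine Finset.prod_congr rfl fun k hk => ?_
    rw [Finset.mem_range] at hk
    rw [hps (q m + k) (by omega) (by omega)]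
  have hK : (N - m) + s = (s - q m) + ((N - m) + q m) := by omega
  have hRHS : (∏ k ∈ Finset.range ((N - m) + s), (z + ((s:ℕ):ℝ) - 1 - m - k))
      = (∏ k ∈ Finset.range (s - q m), (z + ((s:ℕ):ℝ) - 1 - m - k))
        * ∏ k ∈ Finset.range ((N - m) + q m), (z + ((s:ℕ):ℝ) - 1 - m - ((s - q m + k : ℕ):ℝ)) := by
    rw [hK]
    exact Finset.prod_range_add (fun k => z + ((s:ℕ):ℝ) - 1 - m - (k:ℝ)) _ _
  have chunk2 : (∏ k ∈ Finset.range ((N - m) + q m),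
        (z + ((s:ℕ):ℝ) - 1 - m - ((s - q m + k : ℕ):ℝ)))
      = ∏ k ∈ Finset.range ((N - m) + q m), (z + ((q m : ℝ) - m - 1) - k) := by
    refine Finset.prod_congr rfl fun k _ => by push_cast [Nat.cast_sub hqs]; ring
  have chunk1 : (∏ k ∈ Finset.range (s - q m), (z + ((s:ℕ):ℝ) - 1 - m - k))
      = ∏ k ∈ Finset.range (s - q m), (z + ((q m + k : ℕ):ℝ) - m) := by
    rw [← Finset.prod_range_reflect (fun k => z + ((q m + k : ℕ):ℝ) - (m:ℝ)) (s - q m)]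
    refine Finset.prod_congr rfl fun k hk => ?_
    rw [Finset.mem_range] at hk
    have e : q m + (s - q m - 1 - k) = s - (1 + k) := by omega
    rw [e, Nat.cast_sub (by omega : 1 + k ≤ s)]
    push_cast; ring
  have c' : (∏ j ∈ Finset.Ico m N, (z + (q j : ℝ) - j - 1))
        * ∏ i ∈ Finset.range (q m), (z + (i:ℝ) - p i)
      = ∏ k ∈ Finset.range ((N - m) + q m), (z + ((q m : ℝ) - m - 1) - k) := c
  rw [s1, run, hRHS, chunk2, chunk1, ← c']
  ring

lemma lemB {p q : ℕ → ℕ} (H : ∀ i j, j < p i ↔ i < q j) (N1 : ℕ)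
    (hqN : ∀ j, N1 ≤ j → q j = 0) (r : ℕ) (y : ℝ) :
    (∏ j ∈ Finset.range (p r), (y + (q j : ℝ) - j)) * (∏ i ∈ Finset.range (r+1), (y + (i:ℝ) - p i))
        * ∏ j ∈ Finset.range N1, (y + (q j : ℝ) - j - 1)
      = (∏ j ∈ Finset.range (p r), (y + (q j : ℝ) - j - 1))
          * (∏ i ∈ Finset.range r, (y + (i:ℝ) - p i + 1))
          * (∏ j ∈ Finset.range N1, (y + (q j : ℝ) - j)) * (y - N1) := by
  have hmN : p r ≤ N1 := by
    by_contra hc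
    push_neg at hc
    have := (H r N1).1 hc
    rw [hqN N1 le_rfl] at this
    omega
  have hqs : q (p r) ≤ r := by
    by_contra hc
    push_neg at hc
    have := (H r (p r)).2 hc
    omega
  have hps : ∀ i, q (p r) ≤ i → i < r + 1 → p i = p r := by
    intro i h1 h2
    have ha : p i ≤ p r := by
      by_contra hc
      push_neg at hc
      have := (H i (p r)).1 hc
      omega
    have hb : p r ≤ p i := galois_anti H (by omega)
    omega
  have sA : (∏ j ∈ Finset.range N1, (y + (q j : ℝ) - j - 1))
      = (∏ j ∈ Finset.range (p r), (y + (q j : ℝ) - j - 1))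
        * ∏ j ∈ Finset.Ico (p r) N1, (y + (q j : ℝ) - j - 1) := by
    simp only [Finset.range_eq_Ico]
    exact (Finset.prod_Ico_consecutive _ (Nat.zero_le _) hmN).symm
  have sB : (∏ j ∈ Finset.range N1, (y + (q j : ℝ) - j))
      = (∏ j ∈ Finset.range (p r), (y + (q j : ℝ) - j))
        * ∏ j ∈ Finset.Ico (p r) N1, (y + (q j : ℝ) - j) := by
    simp only [Finset.range_eq_Ico]
    exact (Finset.prod_Ico_consecutive _ (Nat.zero_le _) hmN).symm
  have h1 := helperB H N1 hqN (p r) (r+1) hmN (by omega) hps y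
  have h2 := helperB H N1 hqN (p r) r hmN hqs (fun i hi hir => hps i hi (by omega)) (y+1)
  have h2' : (∏ i ∈ Finset.range r, (y + (i:ℝ) - p i + 1))
        * ∏ j ∈ Finset.Ico (p r) N1, (y + (q j : ℝ) - j)
      = ∏ k ∈ Finset.range ((N1 - p r) + r), (y + ((r:ℝ) - p r) - k) := by
    have ha : (∏ i ∈ Finset.range r, (y + (i:ℝ) - p i + 1))
          * ∏ j ∈ Finset.Ico (p r) N1, (y + (q j : ℝ) - j)
        = (∏ i ∈ Finset.range r, (y + 1 + (i:ℝ) - p i))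
          * ∏ j ∈ Finset.Ico (p r) N1, (y + 1 + (q j : ℝ) - j - 1) := by
      congr 1
      · exact Finset.prod_congr rfl fun i _ => by ring
      · exact Finset.prod_congr rfl fun j _ => by ring
    have hb : (∏ k ∈ Finset.range ((N1 - p r) + r), (y + 1 + ((r:ℕ):ℝ) - 1 - (p r:ℝ) - k))
        = ∏ k ∈ Finset.range ((N1 - p r) + r), (y + ((r:ℝ) - p r) - k) :=
      Finset.prod_congr rfl fun k _ => by ring
    exact ha.trans (h2.trans hb)
  have key : (∏ k ∈ Finset.range ((N1 - p r) + (r+1)), (y + ((r+1:ℕ):ℝ) - 1 - (p r) - k))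
      = (∏ k ∈ Finset.range ((N1 - p r) + r), (y + ((r:ℝ) - p r) - k)) * (y - N1) := by
    have e1 : (N1 - p r) + (r+1) = ((N1 - p r) + r) + 1 := by omega
    rw [e1, Finset.prod_range_succ]
    have e2 : (∏ k ∈ Finset.range ((N1 - p r) + r), (y + ((r+1:ℕ):ℝ) - 1 - (p r) - k))
        = ∏ k ∈ Finset.range ((N1 - p r) + r), (y + ((r:ℝ) - p r) - k) :=
      Finset.prod_congr rfl fun k _ => by push_cast; ring
    rw [e2]
    congr 1
    push_cast [Nat.cast_sub hmN]
    ring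
  calc (∏ j ∈ Finset.range (p r), (y + (q j : ℝ) - j))
        * (∏ i ∈ Finset.range (r+1), (y + (i:ℝ) - p i))
        * ∏ j ∈ Finset.range N1, (y + (q j : ℝ) - j - 1)
      = ((∏ j ∈ Finset.range (p r), (y + (q j : ℝ) - j))
          * (∏ j ∈ Finset.range (p r), (y + (q j : ℝ) - j - 1)))
        * ((∏ i ∈ Finset.range (r+1), (y + (i:ℝ) - p i))
          * ∏ j ∈ Finset.Ico (p r) N1, (y + (q j : ℝ) - j - 1)) := by rw [sA]; ring
    _ = ((∏ j ∈ Finset.range (p r), (y + (q j : ℝ) - j))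
          * (∏ j ∈ Finset.range (p r), (y + (q j : ℝ) - j - 1)))
        * ((∏ i ∈ Finset.range r, (y + (i:ℝ) - p i + 1))
          * (∏ j ∈ Finset.Ico (p r) N1, (y + (q j : ℝ) - j)) * (y - N1)) := by
          rw [h1, key, ← h2']
    _ = (∏ j ∈ Finset.range (p r), (y + (q j : ℝ) - j - 1))
        * (∏ i ∈ Finset.range r, (y + (i:ℝ) - p i + 1))
        * (∏ j ∈ Finset.range N1, (y + (q j : ℝ) - j)) * (y - N1) := by rw [sB]; ring


lemma fubini {M : Type*} [CommMonoid M] {p q : ℕ → ℕ} (H : ∀ i j, j < p i ↔ i < q j) (R C : ℕ)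
    (hR : ∀ i, R ≤ i → p i = 0) (hC : ∀ j, C ≤ j → q j = 0) (f : ℕ → ℕ → M) :
    ∏ i ∈ Finset.range R, ∏ j ∈ Finset.range (p i), f i j
      = ∏ j ∈ Finset.range C, ∏ i ∈ Finset.range (q j), f i j := by
  refine Finset.prod_comm' ?_
  intro i j
  simp only [Finset.mem_range]
  constructor
  · rintro ⟨h1, h2⟩
    have h3 := (H i j).1 h2
    refine ⟨h3, ?_⟩
    by_contra hc
    push_neg at hc
    rw [hC j hc] at h3
    omega
  · rintro ⟨h1, h2⟩
    have h3 := (H i j).2 h1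
    refine ⟨?_, h3⟩
    by_contra hc
    push_neg at hc
    rw [hR i hc] at h3
    omega

lemma dense_ext {F G : ℝ → ℝ} (s : Finset ℝ) (hF : Continuous F) (hG : Continuous G)
    (h : ∀ x, x ∉ s → F x = G x) : ∀ x, F x = G x := by
  have hd : Dense ((s : Set ℝ)ᶜ) := s.finite_toSet.countable.dense_compl ℝ
  have he := hF.ext_on hd hG (fun x hx => h x (by simpa using hx))
  exact fun x => congrFun he x

lemma contDouble (R : ℕ) (g : ℕ → ℕ) (f : ℕ → ℕ → ℝ → ℝ) (hf : ∀ i j, Continuous (f i j)) :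
    Continuous (fun x => ∏ i ∈ Finset.range R, ∏ j ∈ Finset.range (g i), f i j x) :=
  continuous_finset_prod _ fun i _ => continuous_finset_prod _ fun j _ => hf i j

lemma corner {p q : ℕ → ℕ} (H : ∀ i j, j < p i ↔ i < q j) (R : ℕ)
    (hR : ∀ i, R ≤ i → p i = 0) (hne : ∑ i ∈ Finset.range R, p i ≠ 0) :
    ∃ r c, r < R ∧ p r = c + 1 ∧ q c = r + 1 ∧ (∀ i, r < i → p i = 0) ∧
      (∀ i j, j < Function.update p r c i ↔ i < Function.update q c r j) := by
  have hex : ∃ i ∈ Finset.range R, p i ≠ 0 := by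
    by_contra hc
    push_neg at hc
    exact hne (Finset.sum_eq_zero hc)
  set s : Finset ℕ := (Finset.range R).filter (fun i => p i ≠ 0) with hs
  have hsne : s.Nonempty := by
    obtain ⟨i, hi, hpi⟩ := hex
    exact ⟨i, by simp [hs, hi, hpi]⟩
  set r := s.max' hsne with hr
  have hrs : r ∈ s := s.max'_mem hsne
  have hrR : r < R := by
    have := Finset.mem_filter.1 hrs
    simpa using this.1
  have hpr : p r ≠ 0 := (Finset.mem_filter.1 hrs).2
  have hafter : ∀ i, r < i → p i = 0 := by
    intro i hi
    by_contra hc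
    rcases lt_or_ge i R with hiR | hiR
    · have : i ∈ s := Finset.mem_filter.2 ⟨Finset.mem_range.2 hiR, hc⟩
      have := s.le_max' i this
      omega
    · exact hc (hR i hiR)
  set c := p r - 1 with hc
  have hprc : p r = c + 1 := by omega
  have hqc : q c = r + 1 := by
    have h1 : r < q c := (H r c).1 (by omega)
    have h2 : ¬ (r + 1 < q c) := by
      intro hh
      have := (H (r+1) c).2 hh
      rw [hafter (r+1) (by omega)] at this
      omega
    omega
  refine ⟨r, c, hrR, hprc, hqc, hafter, ?_⟩
  intro i j
  rcases eq_or_ne i r with hi | hi <;> rcases eq_or_ne j c with hj | hj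
  · subst hi; subst hj
    simp
  · subst hi
    rw [Function.update_self, Function.update_of_ne hj]
    constructor
    · intro hjc
      have hjc' : j < c := by omega
      have : q c ≤ q j := by
        have := galois_anti (p := q) (q := p) (fun a b => (H b a).symm) (le_of_lt hjc')
        exact this
      omega
    · intro hrq
      have : j < p r := (H r j).2 hrq
      rcases lt_trichotomy j c with h | h | h
      · omega
      · exact absurd h hj
      · omega
  · subst hj
    rw [Function.update_of_ne hi, Function.update_self]
    constructor
    · intro hcp
      rcases lt_or_ge i r with h | h
      · omega
      · have : p i = 0 := hafter i (by omega)
        omega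
    · intro hir
      have : p r ≤ p i := galois_anti H (by omega)
      omega
  · rw [Function.update_of_ne hi, Function.update_of_ne hj]
    exact H i j



lemma MAIN : ∀ (ν : ℕ) (pA qA pB qB : ℕ → ℕ) (RA N1 N2 : ℕ),
    (∀ i j, j < pA i ↔ i < qA j) → (∀ i j, j < pB i ↔ i < qB j) →
    (∀ i, RA ≤ i → pA i = 0) → (∀ j, N1 ≤ j → qA j = 0) → (∀ i, N2 ≤ i → pB i = 0) →
    (∑ i ∈ Finset.range RA, pA i) + (∑ i ∈ Finset.range N2, pB i) = ν →
    ∀ x : ℝ,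
    (∏ i ∈ Finset.range N2, ∏ j ∈ Finset.range N1, (x - (i:ℝ) - j - 1)) *
    ((∏ i ∈ Finset.range RA, ∏ j ∈ Finset.range (pA i), (x + (qA j:ℝ) + pB i - i - j - 1)) *
    (∏ i ∈ Finset.range N2, ∏ j ∈ Finset.range (pB i), (x - (qB j:ℝ) - pA i + i + j + 1)))
    = (∏ i ∈ Finset.range RA, ∏ j ∈ Finset.range (pA i), (x - (N2:ℝ) + i - j)) *
      ((∏ i ∈ Finset.range N2, ∏ j ∈ Finset.range (pB i), (x - (N1:ℝ) - i + j)) *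
      (∏ i ∈ Finset.range N2, ∏ j ∈ Finset.range N1, (x + (qA j:ℝ) + pB i - i - j - 1))) := by
  intro ν
  induction ν using Nat.strong_induction_on with
  | _ ν ih =>
    intro pA qA pB qB RA N1 N2 HA HB hRA wA hB hsum
    by_cases hA0 : ∑ i ∈ Finset.range RA, pA i = 0
    · by_cases hB0 : ∑ i ∈ Finset.range N2, pB i = 0
      · -- base case
        intro x
        have hpA : ∀ i, pA i = 0 := by
          intro i
          rcases lt_or_ge i RA with h | h
          · exact (Finset.sum_eq_zero_iff.1 hA0) i (Finset.mem_range.2 h)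
          · exact hRA i h
        have hpB : ∀ i, i < N2 → pB i = 0 := by
          intro i h
          exact (Finset.sum_eq_zero_iff.1 hB0) i (Finset.mem_range.2 h)
        have hqA : ∀ j, qA j = 0 := by
          intro j
          by_contra hc
          have : j < pA 0 := (HA 0 j).2 (by omega)
          rw [hpA 0] at this
          omega
        have e1 : (∏ i ∈ Finset.range RA, ∏ j ∈ Finset.range (pA i),
            (x + (qA j:ℝ) + pB i - i - j - 1)) = 1 :=
          Finset.prod_eq_one fun i _ => by rw [hpA i]; simp
        have e2 : (∏ i ∈ Finset.range N2, ∏ j ∈ Finset.range (pB i),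
            (x - (qB j:ℝ) - pA i + i + j + 1)) = 1 :=
          Finset.prod_eq_one fun i hi => by rw [hpB i (Finset.mem_range.1 hi)]; simp
        have e3 : (∏ i ∈ Finset.range RA, ∏ j ∈ Finset.range (pA i),
            (x - (N2:ℝ) + i - j)) = 1 :=
          Finset.prod_eq_one fun i _ => by rw [hpA i]; simp
        have e4 : (∏ i ∈ Finset.range N2, ∏ j ∈ Finset.range (pB i),
            (x - (N1:ℝ) - i + j)) = 1 :=
          Finset.prod_eq_one fun i hi => by rw [hpB i (Finset.mem_range.1 hi)]; simp
        have e5 : (∏ i ∈ Finset.range N2, ∏ j ∈ Finset.range N1,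
              (x + (qA j:ℝ) + pB i - i - j - 1))
            = ∏ i ∈ Finset.range N2, ∏ j ∈ Finset.range N1, (x - (i:ℝ) - j - 1) := by
          refine Finset.prod_congr rfl fun i hi => Finset.prod_congr rfl fun j _ => ?_
          rw [hqA j, hpB i (Finset.mem_range.1 hi)]
          push_cast; ring
        rw [e1, e2, e3, e4, e5]
        ring
      · -- B-step
        obtain ⟨r, c, hrN2, hprc, hqc, hafter, HB'⟩ := corner HB N2 hB hB0
        have hpA : ∀ i, pA i = 0 := by
          intro i
          rcases lt_or_ge i RA with h | h
          · exact (Finset.sum_eq_zero_iff.1 hA0) i (Finset.mem_range.2 h)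
          · exact hRA i h
        have hCB : ∀ j, pB 0 ≤ j → qB j = 0 := by
          intro j hj
          by_contra hc
          have := (HB 0 j).2 (by omega)
          omega
        have hcCB : c < pB 0 := lt_of_lt_of_le (by omega) (galois_anti HB (Nat.zero_le r))
        have hB' : ∀ i, N2 ≤ i → Function.update pB r c i = 0 := by
          intro i hi
          rw [Function.update_of_ne (by omega)]
          exact hB i hi
        have hqB' : ∀ j, pB 0 ≤ j → Function.update qB c r j = 0 := by
          intro j hj
          rw [Function.update_of_ne (by omega)]
          exact hCB j hj
        have hsum' : (∑ i ∈ Finset.range RA, pA i)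
            + ∑ i ∈ Finset.range N2, Function.update pB r c i = ν - 1 := by
          rw [Finset.sum_update_of_mem (Finset.mem_range.2 hrN2), Finset.sdiff_singleton_eq_erase]
          have h2 := Finset.add_sum_erase (Finset.range N2) pB (Finset.mem_range.2 hrN2)
          omega
        have hν : ν - 1 < ν := by omega
        have IH := ih (ν - 1) hν pA qA (Function.update pB r c) (Function.update qB c r)
          RA N1 N2 HA HB' hRA wA hB' hsum'
        refine dense_ext (((Finset.range N1).image fun j => (r:ℝ) + j + 1 - c - qA j)
            ∪ ((Finset.range r).image fun i => (r:ℝ) - c - i + pA i - 1))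
          (by fun_prop) (by fun_prop) ?_
        intro x hx
        have hT1 : (∏ j ∈ Finset.range N1, (x + (c:ℝ) - r + qA j - j - 1)) ≠ 0 := by
          rw [Finset.prod_ne_zero_iff]
          intro j hj h0
          exact hx (Finset.mem_union_left _ (Finset.mem_image.2 ⟨j, hj, by linarith⟩))
        have hT2 : (∏ i ∈ Finset.range r, (x + (c:ℝ) - r + i - pA i + 1)) ≠ 0 := by
          rw [Finset.prod_ne_zero_iff]
          intro i hi h0
          exact hx (Finset.mem_union_right _ (Finset.mem_image.2 ⟨i, hi, by linarith⟩))
        have hAD1 : (∏ i ∈ Finset.range RA, ∏ j ∈ Finset.range (pA i),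
            (x + (qA j:ℝ) + pB i - i - j - 1)) = 1 :=
          Finset.prod_eq_one fun i _ => by rw [hpA i]; simp
        have hAD1' : (∏ i ∈ Finset.range RA, ∏ j ∈ Finset.range (pA i),
            (x + (qA j:ℝ) + Function.update pB r c i - i - j - 1)) = 1 :=
          Finset.prod_eq_one fun i _ => by rw [hpA i]; simp
        have hGD : (∏ i ∈ Finset.range N2, ∏ j ∈ Finset.range N1,
              (x + (qA j:ℝ) + pB i - i - j - 1))
            = (∏ i ∈ (Finset.range N2).erase r, ∏ j ∈ Finset.range N1,
                (x + (qA j:ℝ) + pB i - i - j - 1))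
              * ∏ j ∈ Finset.range N1, (x + (c:ℝ) - r + qA j - j) := by
          rw [← Finset.prod_erase_mul (Finset.range N2) _ (Finset.mem_range.2 hrN2)]
          congr 1
          rw [hprc]
          exact Finset.prod_congr rfl fun j _ => by push_cast; ring
        have hGD' : (∏ i ∈ Finset.range N2, ∏ j ∈ Finset.range N1,
              (x + (qA j:ℝ) + Function.update pB r c i - i - j - 1))
            = (∏ i ∈ (Finset.range N2).erase r, ∏ j ∈ Finset.range N1,
                (x + (qA j:ℝ) + pB i - i - j - 1))
              * ∏ j ∈ Finset.range N1, (x + (c:ℝ) - r + qA j - j - 1) := by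
          rw [← Finset.prod_erase_mul (Finset.range N2) _ (Finset.mem_range.2 hrN2)]
          congr 1
          · exact Finset.prod_congr rfl fun i hi => Finset.prod_congr rfl fun j _ => by
              rw [Function.update_of_ne (Finset.ne_of_mem_erase hi)]
          · rw [Function.update_self]
            exact Finset.prod_congr rfl fun j _ => by push_cast; ring
        have hv : (∏ i ∈ Finset.range (qB c), (x - (qB c:ℝ) - pA i + i + c + 1))
            = ∏ i ∈ Finset.range (r+1), (x + (c:ℝ) - r + i - pA i) := by
          rw [hqc]
          exact Finset.prod_congr rfl fun i _ => by push_cast; ring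
        have hBD : (∏ i ∈ Finset.range N2, ∏ j ∈ Finset.range (pB i),
              (x - (qB j:ℝ) - pA i + i + j + 1))
            = (∏ j ∈ (Finset.range (pB 0)).erase c, ∏ i ∈ Finset.range (qB j),
                (x - (qB j:ℝ) - pA i + i + j + 1))
              * ∏ i ∈ Finset.range (r+1), (x + (c:ℝ) - r + i - pA i) := by
          rw [fubini HB N2 (pB 0) hB hCB (fun i j => (x - (qB j:ℝ) - pA i + i + j + 1)), ← hv]
          exact (Finset.prod_erase_mul _ _ (Finset.mem_range.2 hcCB)).symm
        have hBD' : (∏ i ∈ Finset.range N2, ∏ j ∈ Finset.range (Function.update pB r c i),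
              (x - (Function.update qB c r j:ℝ) - pA i + i + j + 1))
            = (∏ j ∈ (Finset.range (pB 0)).erase c, ∏ i ∈ Finset.range (qB j),
                (x - (qB j:ℝ) - pA i + i + j + 1))
              * ∏ i ∈ Finset.range r, (x + (c:ℝ) - r + i - pA i + 1) := by
          rw [fubini HB' N2 (pB 0) hB' hqB'
            (fun i j => (x - (Function.update qB c r j:ℝ) - pA i + i + j + 1))]
          rw [← Finset.prod_erase_mul (Finset.range (pB 0)) _ (Finset.mem_range.2 hcCB)]
          congr 1
          · exact Finset.prod_congr rfl fun j hj => by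
              rw [Function.update_of_ne (Finset.ne_of_mem_erase hj)]
          · rw [Function.update_self]
            exact Finset.prod_congr rfl fun i _ => by push_cast; ring
        have hBN : (∏ i ∈ Finset.range N2, ∏ j ∈ Finset.range (pB i), (x - (N1:ℝ) - i + j))
            = (∏ i ∈ (Finset.range N2).erase r, ∏ j ∈ Finset.range (pB i), (x - (N1:ℝ) - i + j))
              * ((∏ j ∈ Finset.range c, (x - (N1:ℝ) - r + j)) * (x - (N1:ℝ) - r + c)) := by
          rw [← Finset.prod_erase_mul (Finset.range N2) _ (Finset.mem_range.2 hrN2)]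
          congr 1
          rw [hprc, Finset.prod_range_succ]
        have hBN' : (∏ i ∈ Finset.range N2, ∏ j ∈ Finset.range (Function.update pB r c i),
              (x - (N1:ℝ) - i + j))
            = (∏ i ∈ (Finset.range N2).erase r, ∏ j ∈ Finset.range (pB i), (x - (N1:ℝ) - i + j))
              * ∏ j ∈ Finset.range c, (x - (N1:ℝ) - r + j) := by
          rw [← Finset.prod_erase_mul (Finset.range N2) _ (Finset.mem_range.2 hrN2)]
          congr 1
          · exact Finset.prod_congr rfl fun i hi => by
              rw [Function.update_of_ne (Finset.ne_of_mem_erase hi)]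
          · rw [Function.update_self]
        have L := lemB HA N1 wA r (x + (c:ℝ) - r)
        rw [hpA r] at L
        simp only [Finset.range_zero, Finset.prod_empty, one_mul] at L
        have IHx := IH x
        rw [hAD1', hBD', hBN', hGD'] at IHx
        rw [hAD1, hBD, hBN, hGD]
        apply mul_right_cancel₀ (mul_ne_zero hT2 hT1)
        have key : ((∏ i ∈ Finset.range N2, ∏ j ∈ Finset.range N1, (x - (i:ℝ) - j - 1)) *
              (1 * ((∏ j ∈ (Finset.range (pB 0)).erase c, ∏ i ∈ Finset.range (qB j),
                  (x - (qB j:ℝ) - pA i + i + j + 1))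
                * ∏ i ∈ Finset.range (r+1), (x + (c:ℝ) - r + i - pA i)))) *
              ((∏ i ∈ Finset.range r, (x + (c:ℝ) - r + i - pA i + 1)) *
               (∏ j ∈ Finset.range N1, (x + (c:ℝ) - r + qA j - j - 1)))
            = ((∏ i ∈ Finset.range RA, ∏ j ∈ Finset.range (pA i), (x - (N2:ℝ) + i - j)) *
              (((∏ i ∈ (Finset.range N2).erase r, ∏ j ∈ Finset.range (pB i),
                  (x - (N1:ℝ) - i + j))
                * ∏ j ∈ Finset.range c, (x - (N1:ℝ) - r + j)) *
               ((∏ i ∈ (Finset.range N2).erase r, ∏ j ∈ Finset.range N1,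
                  (x + (qA j:ℝ) + pB i - i - j - 1))
                * ∏ j ∈ Finset.range N1, (x + (c:ℝ) - r + qA j - j - 1)))) *
              ((∏ i ∈ Finset.range r, (x + (c:ℝ) - r + i - pA i + 1)) *
               ((∏ j ∈ Finset.range N1, (x + (c:ℝ) - r + qA j - j))
                * (x + (c:ℝ) - r - N1))) := by
          calc ((∏ i ∈ Finset.range N2, ∏ j ∈ Finset.range N1, (x - (i:ℝ) - j - 1)) *
              (1 * ((∏ j ∈ (Finset.range (pB 0)).erase c, ∏ i ∈ Finset.range (qB j),
                  (x - (qB j:ℝ) - pA i + i + j + 1))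
                * ∏ i ∈ Finset.range (r+1), (x + (c:ℝ) - r + i - pA i)))) *
              ((∏ i ∈ Finset.range r, (x + (c:ℝ) - r + i - pA i + 1)) *
               (∏ j ∈ Finset.range N1, (x + (c:ℝ) - r + qA j - j - 1)))
              = ((∏ i ∈ Finset.range N2, ∏ j ∈ Finset.range N1, (x - (i:ℝ) - j - 1)) *
              (1 * ((∏ j ∈ (Finset.range (pB 0)).erase c, ∏ i ∈ Finset.range (qB j),
                  (x - (qB j:ℝ) - pA i + i + j + 1))
                * ∏ i ∈ Finset.range r, (x + (c:ℝ) - r + i - pA i + 1)))) *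
              ((∏ i ∈ Finset.range (r+1), (x + (c:ℝ) - r + i - pA i)) *
               (∏ j ∈ Finset.range N1, (x + (c:ℝ) - r + qA j - j - 1))) := by ring
            _ = ((∏ i ∈ Finset.range N2, ∏ j ∈ Finset.range N1, (x - (i:ℝ) - j - 1)) *
              (1 * ((∏ j ∈ (Finset.range (pB 0)).erase c, ∏ i ∈ Finset.range (qB j),
                  (x - (qB j:ℝ) - pA i + i + j + 1))
                * ∏ i ∈ Finset.range r, (x + (c:ℝ) - r + i - pA i + 1)))) *
              ((∏ i ∈ Finset.range r, (x + (c:ℝ) - r + i - pA i + 1)) *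
               ((∏ j ∈ Finset.range N1, (x + (c:ℝ) - r + qA j - j))
                * (x + (c:ℝ) - r - N1))) := by
                rw [show (∏ i ∈ Finset.range (r+1), (x + (c:ℝ) - r + i - pA i)) *
                 (∏ j ∈ Finset.range N1, (x + (c:ℝ) - r + qA j - j - 1))
                  = (∏ i ∈ Finset.range r, (x + (c:ℝ) - r + i - pA i + 1)) *
                 ((∏ j ∈ Finset.range N1, (x + (c:ℝ) - r + qA j - j))
                  * (x + (c:ℝ) - r - N1)) from by linear_combination L]
            _ = ((∏ i ∈ Finset.range RA, ∏ j ∈ Finset.range (pA i), (x - (N2:ℝ) + i - j)) *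
              (((∏ i ∈ (Finset.range N2).erase r, ∏ j ∈ Finset.range (pB i),
                  (x - (N1:ℝ) - i + j))
                * ∏ j ∈ Finset.range c, (x - (N1:ℝ) - r + j)) *
               ((∏ i ∈ (Finset.range N2).erase r, ∏ j ∈ Finset.range N1,
                  (x + (qA j:ℝ) + pB i - i - j - 1))
                * ∏ j ∈ Finset.range N1, (x + (c:ℝ) - r + qA j - j - 1)))) *
              ((∏ i ∈ Finset.range r, (x + (c:ℝ) - r + i - pA i + 1)) *
               ((∏ j ∈ Finset.range N1, (x + (c:ℝ) - r + qA j - j))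
                * (x + (c:ℝ) - r - N1))) := by rw [IHx]
        linear_combination key
    · -- A-step
      obtain ⟨r, c, hrR, hprc, hqc, hafter, HA'⟩ := corner HA RA hRA hA0
      have hprN1 : pA r ≤ N1 := by
        by_contra hc
        push_neg at hc
        have := (HA r N1).1 hc
        rw [wA N1 le_rfl] at this
        omega
      have hcN1 : c < N1 := by omega
      have hRA' : ∀ i, RA ≤ i → Function.update pA r c i = 0 := by
        intro i hi
        rw [Function.update_of_ne (by omega)]
        exact hRA i hi
      have wA' : ∀ j, N1 ≤ j → Function.update qA c r j = 0 := by
        intro j hj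
        rw [Function.update_of_ne (by omega)]
        exact wA j hj
      have hsum' : (∑ i ∈ Finset.range RA, Function.update pA r c i)
          + ∑ i ∈ Finset.range N2, pB i = ν - 1 := by
        rw [Finset.sum_update_of_mem (Finset.mem_range.2 hrR), Finset.sdiff_singleton_eq_erase]
        have h2 := Finset.add_sum_erase (Finset.range RA) pA (Finset.mem_range.2 hrR)
        omega
      have hν : ν - 1 < ν := by omega
      have IH := ih (ν - 1) hν (Function.update pA r c) (Function.update qA c r) pB qB RA N1 N2 HA' HB hRA' wA' hB hsum'
      refine dense_ext ((((Finset.range r).image fun i => (c:ℝ) + i + 1 - r - pB i)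
          ∪ ((Finset.range (pB r)).image fun j => (qB j:ℝ) - j - 1 - r + c))
          ∪ ((Finset.range N2).image fun i => (c:ℝ) + i + 1 - r - pB i))
        (by fun_prop) (by fun_prop) ?_
      intro x hx
      have hT1 : (∏ i ∈ Finset.range r, (x + (r:ℝ) - c + pB i - i - 1)) ≠ 0 := by
        rw [Finset.prod_ne_zero_iff]
        intro i hi h0
        exact hx (Finset.mem_union_left _ (Finset.mem_union_left _
          (Finset.mem_image.2 ⟨i, hi, by linarith⟩)))
      have hT2 : (∏ j ∈ Finset.range (pB r), (x + (r:ℝ) - c + j - qB j + 1)) ≠ 0 := by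
        rw [Finset.prod_ne_zero_iff]
        intro j hj h0
        exact hx (Finset.mem_union_left _ (Finset.mem_union_right _
          (Finset.mem_image.2 ⟨j, hj, by linarith⟩)))
      have hT3 : (∏ i ∈ Finset.range N2, (x + (r:ℝ) - c + pB i - i - 1)) ≠ 0 := by
        rw [Finset.prod_ne_zero_iff]
        intro i hi h0
        exact hx (Finset.mem_union_right _ (Finset.mem_image.2 ⟨i, hi, by linarith⟩))
      have hu : (∏ i ∈ Finset.range (qA c), (x + (qA c:ℝ) + pB i - i - c - 1))
          = ∏ i ∈ Finset.range (r+1), (x + (r:ℝ) - c + pB i - i) := by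
        rw [hqc]
        exact Finset.prod_congr rfl fun i _ => by push_cast; ring
      have hAD : (∏ i ∈ Finset.range RA, ∏ j ∈ Finset.range (pA i),
            (x + (qA j:ℝ) + pB i - i - j - 1))
          = (∏ j ∈ (Finset.range N1).erase c, ∏ i ∈ Finset.range (qA j),
              (x + (qA j:ℝ) + pB i - i - j - 1))
            * ∏ i ∈ Finset.range (r+1), (x + (r:ℝ) - c + pB i - i) := by
        rw [fubini HA RA N1 hRA wA (fun i j => (x + (qA j:ℝ) + pB i - i - j - 1)), ← hu]
        exact (Finset.prod_erase_mul _ _ (Finset.mem_range.2 hcN1)).symm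
      have hAD' : (∏ i ∈ Finset.range RA, ∏ j ∈ Finset.range (Function.update pA r c i),
            (x + (Function.update qA c r j:ℝ) + pB i - i - j - 1))
          = (∏ j ∈ (Finset.range N1).erase c, ∏ i ∈ Finset.range (qA j),
              (x + (qA j:ℝ) + pB i - i - j - 1))
            * ∏ i ∈ Finset.range r, (x + (r:ℝ) - c + pB i - i - 1) := by
        rw [fubini HA' RA N1 hRA' wA'
          (fun i j => (x + (Function.update qA c r j:ℝ) + pB i - i - j - 1))]
        rw [← Finset.prod_erase_mul (Finset.range N1) _ (Finset.mem_range.2 hcN1)]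
        congr 1
        · exact Finset.prod_congr rfl fun j hj => by
            rw [Function.update_of_ne (Finset.ne_of_mem_erase hj)]
        · rw [Function.update_self]
          exact Finset.prod_congr rfl fun i _ => by push_cast; ring
      have hGD : (∏ i ∈ Finset.range N2, ∏ j ∈ Finset.range N1,
            (x + (qA j:ℝ) + pB i - i - j - 1))
          = (∏ j ∈ (Finset.range N1).erase c, ∏ i ∈ Finset.range N2,
              (x + (qA j:ℝ) + pB i - i - j - 1))
            * ∏ i ∈ Finset.range N2, (x + (r:ℝ) - c + pB i - i) := by
        rw [Finset.prod_comm]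
        rw [← Finset.prod_erase_mul (Finset.range N1) _ (Finset.mem_range.2 hcN1)]
        congr 1
        rw [hqc]
        exact Finset.prod_congr rfl fun i _ => by push_cast; ring
      have hGD' : (∏ i ∈ Finset.range N2, ∏ j ∈ Finset.range N1,
            (x + (Function.update qA c r j:ℝ) + pB i - i - j - 1))
          = (∏ j ∈ (Finset.range N1).erase c, ∏ i ∈ Finset.range N2,
              (x + (qA j:ℝ) + pB i - i - j - 1))
            * ∏ i ∈ Finset.range N2, (x + (r:ℝ) - c + pB i - i - 1) := by
        rw [Finset.prod_comm]
        rw [← Finset.prod_erase_mul (Finset.range N1) _ (Finset.mem_range.2 hcN1)]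
        congr 1
        · exact Finset.prod_congr rfl fun j hj => by
            rw [Function.update_of_ne (Finset.ne_of_mem_erase hj)]
        · rw [Function.update_self]
          exact Finset.prod_congr rfl fun i _ => by push_cast; ring
      obtain ⟨KBD, hBD, hBD'⟩ : ∃ K, (∏ i ∈ Finset.range N2, ∏ j ∈ Finset.range (pB i),
            (x - (qB j:ℝ) - pA i + i + j + 1))
            = K * ∏ j ∈ Finset.range (pB r), (x + (r:ℝ) - c + j - qB j) ∧
          (∏ i ∈ Finset.range N2, ∏ j ∈ Finset.range (pB i),
            (x - (qB j:ℝ) - Function.update pA r c i + i + j + 1))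
            = K * ∏ j ∈ Finset.range (pB r), (x + (r:ℝ) - c + j - qB j + 1) := by
        rcases lt_or_ge r N2 with hrN2 | hrN2
        · refine ⟨∏ i ∈ (Finset.range N2).erase r, ∏ j ∈ Finset.range (pB i),
              (x - (qB j:ℝ) - pA i + i + j + 1), ?_, ?_⟩
          · rw [← Finset.prod_erase_mul (Finset.range N2) _ (Finset.mem_range.2 hrN2)]
            congr 1
            rw [hprc]
            exact Finset.prod_congr rfl fun j _ => by push_cast; ring
          · rw [← Finset.prod_erase_mul (Finset.range N2) _ (Finset.mem_range.2 hrN2)]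
            congr 1
            · exact Finset.prod_congr rfl fun i hi => by
                rw [Function.update_of_ne (Finset.ne_of_mem_erase hi)]
            · rw [Function.update_self]
              exact Finset.prod_congr rfl fun j _ => by push_cast; ring
        · have hpBr : pB r = 0 := hB r hrN2
          refine ⟨∏ i ∈ Finset.range N2, ∏ j ∈ Finset.range (pB i),
              (x - (qB j:ℝ) - pA i + i + j + 1), ?_, ?_⟩
          · rw [hpBr]; simp
          · rw [hpBr]
            simp only [Finset.range_zero, Finset.prod_empty, mul_one]
            exact Finset.prod_congr rfl fun i hi => by
              rw [Function.update_of_ne (by have := Finset.mem_range.1 hi; omega)]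
      have hAN : (∏ i ∈ Finset.range RA, ∏ j ∈ Finset.range (pA i), (x - (N2:ℝ) + i - j))
          = (∏ i ∈ (Finset.range RA).erase r, ∏ j ∈ Finset.range (pA i), (x - (N2:ℝ) + i - j))
            * ((∏ j ∈ Finset.range c, (x - (N2:ℝ) + r - j)) * (x - (N2:ℝ) + r - c)) := by
        rw [← Finset.prod_erase_mul (Finset.range RA) _ (Finset.mem_range.2 hrR)]
        congr 1
        rw [hprc, Finset.prod_range_succ]
      have hAN' : (∏ i ∈ Finset.range RA, ∏ j ∈ Finset.range (Function.update pA r c i),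
            (x - (N2:ℝ) + i - j))
          = (∏ i ∈ (Finset.range RA).erase r, ∏ j ∈ Finset.range (pA i), (x - (N2:ℝ) + i - j))
            * ∏ j ∈ Finset.range c, (x - (N2:ℝ) + r - j) := by
        rw [← Finset.prod_erase_mul (Finset.range RA) _ (Finset.mem_range.2 hrR)]
        congr 1
        · exact Finset.prod_congr rfl fun i hi => by
            rw [Function.update_of_ne (Finset.ne_of_mem_erase hi)]
        · rw [Function.update_self]
      have L := lemA HB N2 hB r (x + (r:ℝ) - c)
      have IHx := IH x
      rw [hAD', hBD', hAN', hGD'] at IHx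
      apply mul_right_cancel₀ (mul_ne_zero hT1 (mul_ne_zero hT2 hT3))
      rw [hAD, hBD, hAN, hGD]
      calc ((∏ i ∈ Finset.range N2, ∏ j ∈ Finset.range N1, (x - (i:ℝ) - j - 1)) *
            (((∏ j ∈ (Finset.range N1).erase c, ∏ i ∈ Finset.range (qA j),
                (x + (qA j:ℝ) + pB i - i - j - 1))
              * ∏ i ∈ Finset.range (r+1), (x + (r:ℝ) - c + pB i - i)) *
             (KBD * ∏ j ∈ Finset.range (pB r), (x + (r:ℝ) - c + j - qB j)))) *
            ((∏ i ∈ Finset.range r, (x + (r:ℝ) - c + pB i - i - 1)) *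
             ((∏ j ∈ Finset.range (pB r), (x + (r:ℝ) - c + j - qB j + 1)) *
              (∏ i ∈ Finset.range N2, (x + (r:ℝ) - c + pB i - i - 1))))
          = ((∏ i ∈ Finset.range N2, ∏ j ∈ Finset.range N1, (x - (i:ℝ) - j - 1)) *
            (((∏ j ∈ (Finset.range N1).erase c, ∏ i ∈ Finset.range (qA j),
                (x + (qA j:ℝ) + pB i - i - j - 1))
              * ∏ i ∈ Finset.range r, (x + (r:ℝ) - c + pB i - i - 1)) *
             (KBD * ∏ j ∈ Finset.range (pB r), (x + (r:ℝ) - c + j - qB j + 1)))) *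
            ((∏ i ∈ Finset.range (r+1), (x + (r:ℝ) - c + pB i - i)) *
             ((∏ j ∈ Finset.range (pB r), (x + (r:ℝ) - c + j - qB j)) *
              (∏ i ∈ Finset.range N2, (x + (r:ℝ) - c + pB i - i - 1)))) := by ring
        _ = ((∏ i ∈ Finset.range N2, ∏ j ∈ Finset.range N1, (x - (i:ℝ) - j - 1)) *
            (((∏ j ∈ (Finset.range N1).erase c, ∏ i ∈ Finset.range (qA j),
                (x + (qA j:ℝ) + pB i - i - j - 1))
              * ∏ i ∈ Finset.range r, (x + (r:ℝ) - c + pB i - i - 1)) *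
             (KBD * ∏ j ∈ Finset.range (pB r), (x + (r:ℝ) - c + j - qB j + 1)))) *
            ((∏ i ∈ Finset.range r, (x + (r:ℝ) - c + pB i - i - 1)) *
             ((∏ j ∈ Finset.range (pB r), (x + (r:ℝ) - c + j - qB j + 1)) *
              ((∏ i ∈ Finset.range N2, (x + (r:ℝ) - c + pB i - i)) * (x + (r:ℝ) - c - N2)))) := by
            rw [show (∏ i ∈ Finset.range (r+1), (x + (r:ℝ) - c + pB i - i)) *
             ((∏ j ∈ Finset.range (pB r), (x + (r:ℝ) - c + j - qB j)) *
              (∏ i ∈ Finset.range N2, (x + (r:ℝ) - c + pB i - i - 1)))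
              = (∏ i ∈ Finset.range r, (x + (r:ℝ) - c + pB i - i - 1)) *
             ((∏ j ∈ Finset.range (pB r), (x + (r:ℝ) - c + j - qB j + 1)) *
              ((∏ i ∈ Finset.range N2, (x + (r:ℝ) - c + pB i - i)) * (x + (r:ℝ) - c - N2)))
              from by linear_combination L]
        _ = ((((∏ i ∈ (Finset.range RA).erase r, ∏ j ∈ Finset.range (pA i), (x - (N2:ℝ) + i - j))
            * ∏ j ∈ Finset.range c, (x - (N2:ℝ) + r - j)) *
            ((∏ i ∈ Finset.range N2, ∏ j ∈ Finset.range (pB i), (x - (N1:ℝ) - i + j)) *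
             ((∏ j ∈ (Finset.range N1).erase c, ∏ i ∈ Finset.range N2,
                (x + (qA j:ℝ) + pB i - i - j - 1))
              * ∏ i ∈ Finset.range N2, (x + (r:ℝ) - c + pB i - i - 1)))) *
            ((∏ i ∈ Finset.range r, (x + (r:ℝ) - c + pB i - i - 1)) *
             ((∏ j ∈ Finset.range (pB r), (x + (r:ℝ) - c + j - qB j + 1)) *
              ((∏ i ∈ Finset.range N2, (x + (r:ℝ) - c + pB i - i)) * (x + (r:ℝ) - c - N2))))) := by
            rw [← IHx]
        _ = (((∏ i ∈ (Finset.range RA).erase r, ∏ j ∈ Finset.range (pA i), (x - (N2:ℝ) + i - j))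
            * ((∏ j ∈ Finset.range c, (x - (N2:ℝ) + r - j)) * (x - (N2:ℝ) + r - c))) *
            ((∏ i ∈ Finset.range N2, ∏ j ∈ Finset.range (pB i), (x - (N1:ℝ) - i + j)) *
             ((∏ j ∈ (Finset.range N1).erase c, ∏ i ∈ Finset.range N2,
                (x + (qA j:ℝ) + pB i - i - j - 1))
              * ∏ i ∈ Finset.range N2, (x + (r:ℝ) - c + pB i - i)))) *
            ((∏ i ∈ Finset.range r, (x + (r:ℝ) - c + pB i - i - 1)) *
             ((∏ j ∈ Finset.range (pB r), (x + (r:ℝ) - c + j - qB j + 1)) *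
              (∏ i ∈ Finset.range N2, (x + (r:ℝ) - c + pB i - i - 1)))) := by ring


lemma cellsProd {M : Type*} [CommMonoid M] (μ : YoungDiagram) (R : ℕ)
    (hR : ∀ i, R ≤ i → μ.rowLen i = 0) (f : ℕ → ℕ → M) :
    ∏ c ∈ μ.cells, f c.1 c.2 = ∏ i ∈ Finset.range R, ∏ j ∈ Finset.range (μ.rowLen i), f i j := by
  have hcells : μ.cells = (Finset.range R).biUnion
      (fun i => (Finset.range (μ.rowLen i)).image (fun j => (i, j))) := by
    ext ⟨i, j⟩
    simp only [YoungDiagram.mem_cells, Finset.mem_biUnion, Finset.mem_range, Finset.mem_image]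
    constructor
    · intro hij
      have hj : j < μ.rowLen i := YoungDiagram.mem_iff_lt_rowLen.1 hij
      have hi : i < R := by
        by_contra hc
        push_neg at hc
        rw [hR i hc] at hj
        omega
      exact ⟨i, hi, j, hj, rfl⟩
    · rintro ⟨a, ha, b, hb, heq⟩
      rw [Prod.mk.injEq] at heq
      obtain ⟨rfl, rfl⟩ := heq
      exact YoungDiagram.mem_iff_lt_rowLen.2 hb
  rw [hcells, Finset.prod_biUnion]
  · refine Finset.prod_congr rfl fun i _ => ?_
    rw [Finset.prod_image (fun a _ b _ h => by simpa using congrArg Prod.snd h)]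
  · intro a _ b _ hab
    simp only [Function.onFun, Finset.disjoint_left, Finset.mem_image]
    rintro ⟨u, v⟩ ⟨s1, hs1, h1⟩ ⟨s2, hs2, h2⟩
    rw [Prod.mk.injEq] at h1 h2
    exact hab (h1.1.trans h2.1.symm)

theorem stmt7 (N1 N2 : ℕ) (A B : YoungDiagram)
    (hA : A.rowLen 0 ≤ N1) (hB : B.colLen 0 ≤ N2) (x : ℝ)
    (hgrid : ∀ i ∈ Finset.range N2, ∀ j ∈ Finset.range N1,
      x + 1 + (A.colLen j : ℝ) + (B.rowLen i : ℝ) - (((i : ℝ) + 1) + ((j : ℝ) + 1)) ≠ 0)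
    (hAc : ∀ c ∈ A.cells,
      x + (A.colLen c.2 : ℝ) + (B.rowLen c.1 : ℝ) - ((c.1 : ℝ) + 1) - ((c.2 : ℝ) + 1) + 1 ≠ 0)
    (hBc : ∀ c ∈ B.cells,
      x - (B.colLen c.2 : ℝ) - (A.rowLen c.1 : ℝ) + ((c.1 : ℝ) + 1) + ((c.2 : ℝ) + 1) - 1 ≠ 0) :
    ∏ i ∈ Finset.range N2, ∏ j ∈ Finset.range N1,
        (x + 1 - (((i : ℝ) + 1) + ((j : ℝ) + 1))) /
          (x + 1 + (A.colLen j : ℝ) + (B.rowLen i : ℝ) - (((i : ℝ) + 1) + ((j : ℝ) + 1)))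
      = (∏ c ∈ A.cells,
          (x - (N2 : ℝ) + ((c.1 : ℝ) + 1) - ((c.2 : ℝ) + 1)) /
            (x + (A.colLen c.2 : ℝ) + (B.rowLen c.1 : ℝ) - ((c.1 : ℝ) + 1) - ((c.2 : ℝ) + 1) + 1)) *
        ∏ c ∈ B.cells,
          (x - (N1 : ℝ) - ((c.1 : ℝ) + 1) + ((c.2 : ℝ) + 1)) /
            (x - (B.colLen c.2 : ℝ) - (A.rowLen c.1 : ℝ) + ((c.1 : ℝ) + 1) + ((c.2 : ℝ) + 1) - 1) := by
  have HA : ∀ i j, j < A.rowLen i ↔ i < A.colLen j := fun i j =>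
    YoungDiagram.mem_iff_lt_rowLen.symm.trans YoungDiagram.mem_iff_lt_colLen
  have HB : ∀ i j, j < B.rowLen i ↔ i < B.colLen j := fun i j =>
    YoungDiagram.mem_iff_lt_rowLen.symm.trans YoungDiagram.mem_iff_lt_colLen
  have hRA : ∀ i, A.colLen 0 ≤ i → A.rowLen i = 0 := by
    intro i hi
    by_contra hc
    have h2 : i < A.colLen 0 := (HA i 0).1 (Nat.pos_of_ne_zero hc)
    omega
  have wA : ∀ j, N1 ≤ j → A.colLen j = 0 := by
    intro j hj
    by_contra hc
    have h2 : j < A.rowLen 0 := (HA 0 j).2 (Nat.pos_of_ne_zero hc)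
    omega
  have hBv : ∀ i, N2 ≤ i → B.rowLen i = 0 := by
    intro i hi
    by_contra hc
    have h2 : i < B.colLen 0 := (HB i 0).1 (Nat.pos_of_ne_zero hc)
    omega
  have M := MAIN ((∑ i ∈ Finset.range (A.colLen 0), A.rowLen i)
      + ∑ i ∈ Finset.range N2, B.rowLen i)
      A.rowLen A.colLen B.rowLen B.colLen (A.colLen 0) N1 N2 HA HB hRA wA hBv rfl x
  have hGDne : (∏ i ∈ Finset.range N2, ∏ j ∈ Finset.range N1,
      (x + (A.colLen j : ℝ) + B.rowLen i - i - j - 1)) ≠ 0 := by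
    rw [Finset.prod_ne_zero_iff]
    intro i hi
    rw [Finset.prod_ne_zero_iff]
    intro j hj h0
    exact hgrid i hi j hj (by linear_combination h0)
  have hADne : (∏ i ∈ Finset.range (A.colLen 0), ∏ j ∈ Finset.range (A.rowLen i),
      (x + (A.colLen j : ℝ) + B.rowLen i - i - j - 1)) ≠ 0 := by
    rw [Finset.prod_ne_zero_iff]
    intro i hi
    rw [Finset.prod_ne_zero_iff]
    intro j hj h0
    have hmem : ((i, j) : ℕ × ℕ) ∈ A.cells :=
      (YoungDiagram.mem_cells _).2 (YoungDiagram.mem_iff_lt_rowLen.2 (Finset.mem_range.1 hj))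
    exact hAc (i, j) hmem (by linear_combination h0)
  have hBDne : (∏ i ∈ Finset.range N2, ∏ j ∈ Finset.range (B.rowLen i),
      (x - (B.colLen j : ℝ) - A.rowLen i + i + j + 1)) ≠ 0 := by
    rw [Finset.prod_ne_zero_iff]
    intro i hi
    rw [Finset.prod_ne_zero_iff]
    intro j hj h0
    have hmem : ((i, j) : ℕ × ℕ) ∈ B.cells :=
      (YoungDiagram.mem_cells _).2 (YoungDiagram.mem_iff_lt_rowLen.2 (Finset.mem_range.1 hj))
    exact hBc (i, j) hmem (by linear_combination h0)
  have e1 : (∏ i ∈ Finset.range N2, ∏ j ∈ Finset.range N1,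
        (x + 1 - (((i : ℝ) + 1) + ((j : ℝ) + 1))) /
          (x + 1 + (A.colLen j : ℝ) + (B.rowLen i : ℝ) - (((i : ℝ) + 1) + ((j : ℝ) + 1))))
      = (∏ i ∈ Finset.range N2, ∏ j ∈ Finset.range N1, (x - (i:ℝ) - j - 1))
        / ∏ i ∈ Finset.range N2, ∏ j ∈ Finset.range N1,
            (x + (A.colLen j : ℝ) + B.rowLen i - i - j - 1) := by
    rw [← Finset.prod_div_distrib]
    refine Finset.prod_congr rfl fun i _ => ?_
    rw [← Finset.prod_div_distrib]
    refine Finset.prod_congr rfl fun j _ => ?_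
    rw [show x + 1 - (((i : ℝ) + 1) + ((j : ℝ) + 1)) = x - (i:ℝ) - j - 1 from by ring,
      show x + 1 + (A.colLen j : ℝ) + (B.rowLen i : ℝ) - (((i : ℝ) + 1) + ((j : ℝ) + 1))
        = x + (A.colLen j : ℝ) + B.rowLen i - i - j - 1 from by ring]
  have e2 : (∏ c ∈ A.cells,
        (x - (N2 : ℝ) + ((c.1 : ℝ) + 1) - ((c.2 : ℝ) + 1)) /
          (x + (A.colLen c.2 : ℝ) + (B.rowLen c.1 : ℝ) - ((c.1 : ℝ) + 1) - ((c.2 : ℝ) + 1) + 1))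
      = (∏ i ∈ Finset.range (A.colLen 0), ∏ j ∈ Finset.range (A.rowLen i),
          (x - (N2:ℝ) + i - j))
        / ∏ i ∈ Finset.range (A.colLen 0), ∏ j ∈ Finset.range (A.rowLen i),
            (x + (A.colLen j : ℝ) + B.rowLen i - i - j - 1) := by
    rw [show (∏ c ∈ A.cells,
        (x - (N2 : ℝ) + ((c.1 : ℝ) + 1) - ((c.2 : ℝ) + 1)) /
          (x + (A.colLen c.2 : ℝ) + (B.rowLen c.1 : ℝ) - ((c.1 : ℝ) + 1) - ((c.2 : ℝ) + 1) + 1))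
      = ∏ i ∈ Finset.range (A.colLen 0), ∏ j ∈ Finset.range (A.rowLen i),
        ((x - (N2 : ℝ) + ((i : ℝ) + 1) - ((j : ℝ) + 1)) /
          (x + (A.colLen j : ℝ) + (B.rowLen i : ℝ) - ((i : ℝ) + 1) - ((j : ℝ) + 1) + 1))
      from cellsProd A (A.colLen 0) hRA (fun i j =>
        (x - (N2 : ℝ) + ((i : ℝ) + 1) - ((j : ℝ) + 1)) /
          (x + (A.colLen j : ℝ) + (B.rowLen i : ℝ) - ((i : ℝ) + 1) - ((j : ℝ) + 1) + 1))]
    rw [← Finset.prod_div_distrib]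
    refine Finset.prod_congr rfl fun i _ => ?_
    rw [← Finset.prod_div_distrib]
    refine Finset.prod_congr rfl fun j _ => ?_
    rw [show x - (N2 : ℝ) + ((i : ℝ) + 1) - ((j : ℝ) + 1) = x - (N2:ℝ) + i - j from by ring,
      show x + (A.colLen j : ℝ) + (B.rowLen i : ℝ) - ((i : ℝ) + 1) - ((j : ℝ) + 1) + 1
        = x + (A.colLen j : ℝ) + B.rowLen i - i - j - 1 from by ring]
  have e3 : (∏ c ∈ B.cells,
        (x - (N1 : ℝ) - ((c.1 : ℝ) + 1) + ((c.2 : ℝ) + 1)) /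
          (x - (B.colLen c.2 : ℝ) - (A.rowLen c.1 : ℝ) + ((c.1 : ℝ) + 1) + ((c.2 : ℝ) + 1) - 1))
      = (∏ i ∈ Finset.range N2, ∏ j ∈ Finset.range (B.rowLen i), (x - (N1:ℝ) - i + j))
        / ∏ i ∈ Finset.range N2, ∏ j ∈ Finset.range (B.rowLen i),
            (x - (B.colLen j : ℝ) - A.rowLen i + i + j + 1) := by
    rw [show (∏ c ∈ B.cells,
        (x - (N1 : ℝ) - ((c.1 : ℝ) + 1) + ((c.2 : ℝ) + 1)) /
          (x - (B.colLen c.2 : ℝ) - (A.rowLen c.1 : ℝ) + ((c.1 : ℝ) + 1) + ((c.2 : ℝ) + 1) - 1))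
      = ∏ i ∈ Finset.range N2, ∏ j ∈ Finset.range (B.rowLen i),
        ((x - (N1 : ℝ) - ((i : ℝ) + 1) + ((j : ℝ) + 1)) /
          (x - (B.colLen j : ℝ) - (A.rowLen i : ℝ) + ((i : ℝ) + 1) + ((j : ℝ) + 1) - 1))
      from cellsProd B N2 hBv (fun i j =>
        (x - (N1 : ℝ) - ((i : ℝ) + 1) + ((j : ℝ) + 1)) /
          (x - (B.colLen j : ℝ) - (A.rowLen i : ℝ) + ((i : ℝ) + 1) + ((j : ℝ) + 1) - 1))]
    rw [← Finset.prod_div_distrib]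
    refine Finset.prod_congr rfl fun i _ => ?_
    rw [← Finset.prod_div_distrib]
    refine Finset.prod_congr rfl fun j _ => ?_
    rw [show x - (N1 : ℝ) - ((i : ℝ) + 1) + ((j : ℝ) + 1) = x - (N1:ℝ) - i + j from by ring,
      show x - (B.colLen j : ℝ) - (A.rowLen i : ℝ) + ((i : ℝ) + 1) + ((j : ℝ) + 1) - 1
        = x - (B.colLen j : ℝ) - A.rowLen i + i + j + 1 from by ring]
  rw [e1, e2, e3, div_mul_div_comm, div_eq_div_iff hGDne (mul_ne_zero hADne hBDne)]
  linear_combination M
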